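/- Let k ≥ 1 be an integer, Q a nonempty string, and P a string with 100k·|Q| ≤ |P| and δ_H(P, Q^∞[0..|P|)) ≤ 2k. Then there exists an integer j ≥ 0 with (j+2)·|Q| ≤ |P| such that P[j·|Q| .. (j+2)·|Q|) = QQ (the concatenation of Q with itself). -/

import Mathlib

/-- Mismatch positions of two (equal-length) strings:
`Mis(X,Y) = {i : X[i] ≠ Y[i]}`. -/
def mis {α : Type*} [DecidableEq α] [Inhabited α] (X Y : List α) : Finset ℕ :=
  (Finset.range (min X.length Y.length)).filter (fun i => X.getD i default ≠ Y.getD i default)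

/-- Hamming distance of two (equal-length) strings: the number of mismatch positions. -/
def hdist {α : Type*} [DecidableEq α] [Inhabited α] (X Y : List α) : ℕ := (mis X Y).card

/-- The fragment `S[x..x+L)`. -/
def frag {α : Type*} (S : List α) (x L : ℕ) : List α := (S.drop x).take L

/-- `Q^∞[a..a+L)`: the string of length `L` whose `i`-th character is `Q[(a+i) mod |Q|]`. -/
def qinf {α : Type*} [Inhabited α] (Q : List α) (a L : ℕ) : List α :=
  (List.range L).map (fun i => Q.getD ((a + i) % Q.length) default)

/-- A nonempty string is primitive if it is not of the form `Y^h` with `h ≥ 2`. -/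
def Primitive {α : Type*} (Q : List α) : Prop :=
  Q ≠ [] ∧ ∀ (Y : List α) (h : ℕ), 2 ≤ h → Q ≠ (List.replicate h Y).flatten

/-- If `100k·|Q| ≤ |P|` and `δ_H(P, Q^∞[0..|P|)) ≤ 2k`, then some aligned window of `P` of
length `2|Q|` equals `QQ`. -/
theorem stmt11 {α : Type*} [DecidableEq α] [Inhabited α]
    (k : ℕ) (hk : 1 ≤ k) (Q P : List α) (hQ : Q ≠ [])
    (hlen : 100 * k * Q.length ≤ P.length)
    (hper : hdist P (qinf Q 0 P.length) ≤ 2 * k) :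
    ∃ j : ℕ, (j + 2) * Q.length ≤ P.length ∧
      frag P (j * Q.length) (2 * Q.length) = Q ++ Q := by
  set n := Q.length with hn
  have hn0 : 0 < n := List.length_pos_iff.mpr hQ
  set Y := qinf Q 0 P.length with hY
  have hYlen : Y.length = P.length := by simp [qinf, hY]
  -- positions not in mis agree with Q^∞
  have key : ∀ p, p < P.length → p ∉ mis P Y →
      P.getD p default = Q.getD (p % n) default := by
    intro p hp hpm
    have hpr : p < min P.length Y.length := by omega
    have h1 : P.getD p default = Y.getD p default := by
      by_contra h
      exact hpm (Finset.mem_filter.mpr ⟨Finset.mem_range.mpr hpr, h⟩)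
    have h2 : Y.getD p default = Q.getD (p % n) default := by
      rw [hY, qinf, List.getD_eq_getElem _ _ (by simpa [qinf] using hp)]
      simp
      rfl
    rw [h1, h2]
  set B : Finset ℕ := (mis P Y).image (· / n) with hB
  have hBcard : B.card ≤ 2 * k := le_trans (Finset.card_image_le) hper
  set C : Finset ℕ := B.image (· / 2) with hC
  have hCcard : C.card ≤ 2 * k := le_trans (Finset.card_image_le) hBcard
  have : ¬ (Finset.range (50 * k) ⊆ C) := by
    intro hsub
    have := Finset.card_le_card hsub
    simp [Finset.card_range] at this
    omega
  obtain ⟨i, hi, hiC⟩ := Finset.not_subset.mp this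
  rw [Finset.mem_range] at hi
  have hjn : (2 * i + 2) * n ≤ P.length := by
    have h1 : (2 * i + 2) * n ≤ 100 * k * n := Nat.mul_le_mul_right n (by omega)
    omega
  refine ⟨2 * i, hjn, ?_⟩
  have h2iB : 2 * i ∉ B := fun h => hiC (Finset.mem_image.mpr ⟨2 * i, h, by omega⟩)
  have h2i1B : 2 * i + 1 ∉ B := fun h => hiC (Finset.mem_image.mpr ⟨2 * i + 1, h, by omega⟩)
  have hj2 : 2 * i * n + 2 * n ≤ P.length := by
    have : (2 * i + 2) * n = 2 * i * n + 2 * n := by ring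
    omega
  apply List.ext_getElem
  · simp only [frag, List.length_take, List.length_drop, List.length_append]
    omega
  · intro m hm1 hm2
    have hm : m < 2 * n := by
      simp only [frag, List.length_take, List.length_drop] at hm1
      omega
    have hp : 2 * i * n + m < P.length := by omega
    have hfrag : (frag P (2 * i * n) (2 * n))[m] = P[2 * i * n + m]'hp := by
      simp [frag, List.getElem_take, List.getElem_drop]
    have hpm : 2 * i * n + m ∉ mis P Y := by
      intro hmem
      have hdvd : (2 * i * n + m) / n ∈ B := Finset.mem_image.mpr ⟨_, hmem, rfl⟩
      have hdiv : (2 * i * n + m) / n = 2 * i + m / n := by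
        rw [Nat.add_comm, Nat.add_mul_div_right _ _ hn0]; omega
      have hmd : m / n < 2 := Nat.div_lt_iff_lt_mul hn0 |>.mpr (by omega)
      rw [hdiv] at hdvd
      interval_cases h : m / n
      · simp at hdvd; exact h2iB hdvd
      · exact h2i1B hdvd
    have hkey := key _ hp hpm
    have hmod : (2 * i * n + m) % n = m % n := by
      rw [Nat.add_comm, Nat.add_mul_mod_self_right]
    rw [hfrag]
    have hPD : P[2 * i * n + m]'hp = P.getD (2 * i * n + m) default :=
      (List.getD_eq_getElem _ _ hp).symm
    rw [hPD, hkey, hmod]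
    have hmn : m % n < n := Nat.mod_lt _ hn0
    rw [List.getD_eq_getElem _ _ hmn]
    rcases Nat.lt_or_ge m n with h | h
    · have : m % n = m := Nat.mod_eq_of_lt h
      simp [List.getElem_append, h, this]
      rw [dif_pos (show m < Q.length from h)]
    · have hmod2 : m % n = m - n := by
        rw [Nat.mod_eq_sub_mod h, Nat.mod_eq_of_lt (by omega)]
      rw [List.getElem_append_right (by omega)]
      simp [hmod2]
      rfl
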